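/- Let G : R^n → R be μ-strongly convex (μ > 0) and continuous, let W ⊆ R^n be a closed convex set with nonempty relative interior given by W = {z : h_m(z) ≤ 0, m=1,…,M} with each h_m convex continuous, and suppose relint(W) contains points with h_m strictly negative for all m. For ℓ > 0 let g_ℓ(z) = ∑_m ln(1+e^{ℓ h_m(z)}), let z* be the unique minimizer of G over W, and let z_ℓ be the unique minimizer of G + g_ℓ over R^n. Assume z_ℓ converges to some limit ẑ as ℓ → ∞. Then ẑ = z*. -/

import Mathlib

theorem stmt_9 (n M : ℕ) (hM : 0 < M) (μ : ℝ) (hμ : 0 < μ)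
    (G : EuclideanSpace ℝ (Fin n) → ℝ)
    (hG : StrongConvexOn Set.univ μ G) (hGcont : Continuous G)
    (h : Fin M → EuclideanSpace ℝ (Fin n) → ℝ)
    (hconv : ∀ m, ConvexOn ℝ Set.univ (h m)) (hcont : ∀ m, Continuous (h m))
    (W : Set (EuclideanSpace ℝ (Fin n)))
    (hW : W = {z | ∀ m, h m z ≤ 0})
    (hSlater : ∃ z, ∀ m, h m z < 0)
    (g : ℝ → EuclideanSpace ℝ (Fin n) → ℝ)
    (hg : ∀ ℓ z, g ℓ z = ∑ m, Real.log (1 + Real.exp (ℓ * h m z)))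
    (zstar : EuclideanSpace ℝ (Fin n))
    (hzstar : zstar ∈ W ∧ ∀ z ∈ W, G zstar ≤ G z)
    (zℓ : ℝ → EuclideanSpace ℝ (Fin n))
    (hzℓ : ∀ ℓ : ℝ, 0 < ℓ → ∀ z, G (zℓ ℓ) + g ℓ (zℓ ℓ) ≤ G z + g ℓ z)
    (zhat : EuclideanSpace ℝ (Fin n))
    (hlim : Filter.Tendsto zℓ Filter.atTop (nhds zhat)) :
    zhat = zstar := by
  obtain ⟨z₀, hz₀⟩ := hSlater
  -- g is nonnegative
  have gnonneg : ∀ ℓ z, 0 ≤ g ℓ z := by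
    intro ℓ z
    rw [hg]
    refine Finset.sum_nonneg fun m _ => Real.log_nonneg ?_
    nlinarith [Real.exp_pos (ℓ * h m z)]
  -- g ℓ p → 0 for strictly feasible p
  have key : ∀ p : EuclideanSpace ℝ (Fin n), (∀ m, h m p < 0) →
      Filter.Tendsto (fun ℓ => g ℓ p) Filter.atTop (nhds 0) := by
    intro p hp
    have hterm : ∀ m : Fin M, Filter.Tendsto
        (fun ℓ : ℝ => Real.log (1 + Real.exp (ℓ * h m p))) Filter.atTop (nhds 0) := by
      intro m
      have h1 : Filter.Tendsto (fun ℓ : ℝ => ℓ * h m p) Filter.atTop Filter.atBot :=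
        Filter.tendsto_id.atTop_mul_const_of_neg (hp m)
      have h2 : Filter.Tendsto (fun ℓ : ℝ => Real.exp (ℓ * h m p)) Filter.atTop (nhds 0) :=
        Real.tendsto_exp_atBot.comp h1
      have h3 : ContinuousAt (fun x : ℝ => Real.log (1 + x)) 0 :=
        (Real.continuousAt_log (by norm_num)).comp
          ((continuous_const.add continuous_id).continuousAt)
      have := (h3.tendsto).comp h2
      simpa [Function.comp_def] using this
    have := Filter.Tendsto.congr (fun ℓ => (hg ℓ p).symm)
      (tendsto_finset_sum Finset.univ (fun m _ => hterm m))
    simpa using this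
  have hGz : Filter.Tendsto (fun ℓ => G (zℓ ℓ)) Filter.atTop (nhds (G zhat)) :=
    (hGcont.tendsto zhat).comp hlim
  -- zhat ∈ W
  have hzhatW : zhat ∈ W := by
    rw [hW]
    intro m
    by_contra hpos
    push_neg at hpos
    set c := h m zhat with hc
    have hcz : Filter.Tendsto (fun ℓ => h m (zℓ ℓ)) Filter.atTop (nhds c) :=
      ((hcont m).tendsto zhat).comp hlim
    have hev : ∀ᶠ ℓ in Filter.atTop, c / 2 < h m (zℓ ℓ) :=
      hcz.eventually_const_lt (by linarith)
    have hlow : ∀ᶠ ℓ in Filter.atTop, G (zℓ ℓ) + ℓ * (c / 2) ≤ G z₀ + g ℓ z₀ := by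
      filter_upwards [hev, Filter.eventually_gt_atTop (0 : ℝ)] with ℓ hev hℓ
      have hgb : ℓ * (c / 2) ≤ g ℓ (zℓ ℓ) := by
        have h1 : Real.log (1 + Real.exp (ℓ * h m (zℓ ℓ))) ≥ ℓ * h m (zℓ ℓ) := by
          calc ℓ * h m (zℓ ℓ) = Real.log (Real.exp (ℓ * h m (zℓ ℓ))) := (Real.log_exp _).symm
            _ ≤ Real.log (1 + Real.exp (ℓ * h m (zℓ ℓ))) :=
              Real.log_le_log (Real.exp_pos _) (by linarith)
        have h2 : Real.log (1 + Real.exp (ℓ * h m (zℓ ℓ))) ≤ g ℓ (zℓ ℓ) := by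
          rw [hg]
          refine Finset.single_le_sum (f := fun i => Real.log (1 + Real.exp (ℓ * h i (zℓ ℓ))))
            (fun i _ => Real.log_nonneg ?_) (Finset.mem_univ m)
          nlinarith [Real.exp_pos (ℓ * h i (zℓ ℓ))]
        have h3 : ℓ * (c / 2) ≤ ℓ * h m (zℓ ℓ) := by
          apply mul_le_mul_of_nonneg_left (le_of_lt hev) (le_of_lt hℓ)
        linarith
      have := hzℓ ℓ hℓ z₀
      linarith
    have hlowtop : Filter.Tendsto (fun ℓ : ℝ => G (zℓ ℓ) + ℓ * (c / 2))
        Filter.atTop Filter.atTop := by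
      have h1 : Filter.Tendsto (fun ℓ : ℝ => ℓ * (c / 2)) Filter.atTop Filter.atTop :=
        Filter.tendsto_id.atTop_mul_const (by linarith)
      exact hGz.add_atTop h1
    have hub : Filter.Tendsto (fun ℓ : ℝ => G z₀ + g ℓ z₀) Filter.atTop
        (nhds (G z₀ + 0)) := tendsto_const_nhds.add (key z₀ hz₀)
    exact not_tendsto_atTop_of_tendsto_nhds hub
      (Filter.tendsto_atTop_mono' _ hlow hlowtop)
  -- G zhat ≤ G (p t) for strictly feasible p t
  have hle : G zhat ≤ G zstar := by
    set p : ℝ → EuclideanSpace ℝ (Fin n) := fun t => (1 - t) • zstar + t • z₀ with hp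
    have hfeas : ∀ t : ℝ, t ∈ Set.Ioc (0 : ℝ) 1 → ∀ m, h m (p t) < 0 := by
      rintro t ⟨ht0, ht1⟩ m
      have hzs : h m zstar ≤ 0 := by
        have := hzstar.1; rw [hW] at this; exact this m
      have := (hconv m).2 (Set.mem_univ zstar) (Set.mem_univ z₀)
        (by linarith : (0:ℝ) ≤ 1 - t) (le_of_lt ht0) (by ring)
      have h1 : (1 - t) * h m zstar ≤ 0 := mul_nonpos_of_nonneg_of_nonpos (by linarith) hzs
      have h2 : t * h m z₀ < 0 := mul_neg_of_pos_of_neg ht0 (hz₀ m)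
      calc h m (p t) ≤ (1 - t) • h m zstar + t • h m z₀ := this
        _ = (1 - t) * h m zstar + t * h m z₀ := by simp [smul_eq_mul]
        _ < 0 := by linarith
    have hGpt : ∀ t : ℝ, t ∈ Set.Ioc (0 : ℝ) 1 → G zhat ≤ G (p t) := by
      intro t ht
      have hub : Filter.Tendsto (fun ℓ : ℝ => G (p t) + g ℓ (p t)) Filter.atTop
          (nhds (G (p t) + 0)) := tendsto_const_nhds.add (key (p t) (hfeas t ht))
      have hev : ∀ᶠ ℓ in Filter.atTop, G (zℓ ℓ) ≤ G (p t) + g ℓ (p t) := by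
        filter_upwards [Filter.eventually_gt_atTop (0 : ℝ)] with ℓ hℓ
        have := hzℓ ℓ hℓ (p t)
        have := gnonneg ℓ (zℓ ℓ)
        linarith
      have := le_of_tendsto_of_tendsto hGz hub hev
      linarith
    -- take t → 0⁺
    have hpcont : Filter.Tendsto (fun t : ℝ => G (p t)) (nhdsWithin 0 (Set.Ioi 0))
        (nhds (G zstar)) := by
      have hp0 : p 0 = zstar := by simp [hp]
      have hc : Continuous p := by
        apply Continuous.add
        · exact (continuous_const.sub continuous_id).smul continuous_const
        · exact continuous_id.smul continuous_const
      have := (hGcont.comp hc).continuousAt (x := (0:ℝ))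
      have h2 : Filter.Tendsto (fun t : ℝ => G (p t)) (nhds 0) (nhds (G (p 0))) :=
        this.tendsto
      rw [hp0] at h2
      exact h2.mono_left nhdsWithin_le_nhds
    refine ge_of_tendsto hpcont ?_
    filter_upwards [Ioc_mem_nhdsGT (by norm_num : (0:ℝ) < 1)] with t ht
    exact hGpt t ht
  -- uniqueness via strict convexity
  have hWconv : Convex ℝ W := by
    rw [hW]
    have : {z : EuclideanSpace ℝ (Fin n) | ∀ m, h m z ≤ 0} =
        ⋂ m, {z | z ∈ Set.univ ∧ h m z ≤ 0} := by
      ext z; simp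
    rw [this]
    exact convex_iInter fun m => (hconv m).convex_le 0
  have hstrict : StrictConvexOn ℝ W G :=
    (hG.strictConvexOn hμ).subset (Set.subset_univ W) hWconv
  have hminstar : IsMinOn G W zstar := fun z hz => hzstar.2 z hz
  have hminhat : IsMinOn G W zhat := fun z hz => le_trans hle (hzstar.2 z hz)
  exact hstrict.eq_of_isMinOn hminhat hminstar hzhatW hzstar.1
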